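/- Let (d_1, ..., d_m) be positive integers, let s ∈ (0, 1/2], let σ² = (1/n)·Σ_{i=1}^m d_i(d_i - 1) for some positive integer n with Σ d_i ≤ n, and suppose for some r ∈ (0,1) that Σ_{i: d_i s > 2} d_i(d_i - 1) ≥ (1-r)·nσ². Then Σ_{i: d_i s > 2} (d_i - 1)(1 - e^{-d_i s}) ≥ (1 - e^{-2}) · ((2-s)/2) · (1-r) · n^{1/2} · σ. -/

import Mathlib

open scoped Classical

open Finset

/-- If the large-degree terms (`d i · s > 2`) contribute at least `(1-r) n σ²`
to `∑ d_i (d_i - 1)`, then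
`∑_{i : d_i s > 2} (d_i - 1)(1 - e^{-d_i s}) ≥ (1-e^{-2})·((2-s)/2)·(1-r)·√n·σ`. -/
theorem stmt6 (m n : ℕ) (hn : 0 < n) (d : Fin m → ℕ) (hd : ∀ i, 1 ≤ d i)
    (hsum : ∑ i, d i ≤ n) (s : ℝ) (hs0 : 0 < s) (hs : s ≤ 1 / 2)
    (σ : ℝ) (hσ0 : 0 ≤ σ)
    (hσ : σ ^ 2 = (1 / (n : ℝ)) * ∑ i, (d i : ℝ) * ((d i : ℝ) - 1))
    (r : ℝ) (hr0 : 0 < r) (hr1 : r < 1)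
    (hbig : (1 - r) * (n : ℝ) * σ ^ 2 ≤
      ∑ i ∈ Finset.univ.filter (fun i => 2 < (d i : ℝ) * s),
        (d i : ℝ) * ((d i : ℝ) - 1)) :
    (1 - Real.exp (-2)) * ((2 - s) / 2) * (1 - r) * Real.sqrt n * σ ≤
      ∑ i ∈ Finset.univ.filter (fun i => 2 < (d i : ℝ) * s),
        ((d i : ℝ) - 1) * (1 - Real.exp (-((d i : ℝ) * s))) := by
  set F := Finset.univ.filter (fun i => 2 < (d i : ℝ) * s) with hF
  have h1 : Real.exp (-2) < 1 := by rw [Real.exp_lt_one_iff]; norm_num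
  have hc : (0:ℝ) ≤ (1 - Real.exp (-2)) * ((2 - s) / 2) := by nlinarith
  -- per-term bound
  have hterm : ∀ i ∈ F, (1 - Real.exp (-2)) * ((2 - s) / 2) * (d i : ℝ) ≤
      ((d i : ℝ) - 1) * (1 - Real.exp (-((d i : ℝ) * s))) := by
    intro i hi
    have hi2 : 2 < (d i : ℝ) * s := by simpa [hF] using hi
    have hexp : Real.exp (-((d i : ℝ) * s)) < Real.exp (-2) := by
      apply Real.exp_lt_exp.2; linarith
    have hdpos : (0:ℝ) < d i := by
      exact_mod_cast Nat.lt_of_lt_of_le Nat.zero_lt_one (hd i)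
    have h2 : (2 - s) / 2 * (d i : ℝ) ≤ (d i : ℝ) - 1 := by nlinarith
    have h3 : 1 - Real.exp (-2) ≤ 1 - Real.exp (-((d i : ℝ) * s)) := by linarith
    calc (1 - Real.exp (-2)) * ((2 - s) / 2) * (d i : ℝ)
        = ((2 - s) / 2 * (d i : ℝ)) * (1 - Real.exp (-2)) := by ring
      _ ≤ ((d i : ℝ) - 1) * (1 - Real.exp (-((d i : ℝ) * s))) := by
          apply mul_le_mul h2 h3 (by linarith) (by nlinarith)
  have hsum1 : (1 - Real.exp (-2)) * ((2 - s) / 2) * ∑ i ∈ F, (d i : ℝ) ≤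
      ∑ i ∈ F, ((d i : ℝ) - 1) * (1 - Real.exp (-((d i : ℝ) * s))) := by
    rw [Finset.mul_sum]
    exact Finset.sum_le_sum hterm
  -- (1-r) √n σ ≤ Σ_F d
  have hSnn : (0:ℝ) ≤ ∑ i ∈ F, (d i : ℝ) :=
    Finset.sum_nonneg fun i _ => Nat.cast_nonneg _
  have hsq : ∑ i ∈ F, (d i : ℝ) * ((d i : ℝ) - 1) ≤ (∑ i ∈ F, (d i : ℝ)) ^ 2 := by
    calc ∑ i ∈ F, (d i : ℝ) * ((d i : ℝ) - 1) ≤ ∑ i ∈ F, (d i : ℝ) ^ 2 := by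
          apply Finset.sum_le_sum; intro i _; nlinarith [Nat.cast_nonneg (α := ℝ) (d i)]
      _ ≤ (∑ i ∈ F, (d i : ℝ)) ^ 2 :=
          Finset.sum_sq_le_sq_sum_of_nonneg fun i _ => Nat.cast_nonneg _
  have hkey : (1 - r) * Real.sqrt n * σ ≤ ∑ i ∈ F, (d i : ℝ) := by
    have h4 : (1 - r) * (n : ℝ) * σ ^ 2 ≤ (∑ i ∈ F, (d i : ℝ)) ^ 2 := le_trans hbig hsq
    have h5 : Real.sqrt ((1 - r) * (n : ℝ) * σ ^ 2) ≤ ∑ i ∈ F, (d i : ℝ) := by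
      rw [show (∑ i ∈ F, (d i : ℝ)) = Real.sqrt ((∑ i ∈ F, (d i : ℝ)) ^ 2) from
        (Real.sqrt_sq hSnn).symm]
      exact Real.sqrt_le_sqrt h4
    refine le_trans ?_ h5
    rw [show (1 - r) * (n : ℝ) * σ ^ 2 = (1 - r) * ((n:ℝ) * σ ^ 2) by ring,
      Real.sqrt_mul (by linarith), Real.sqrt_mul (Nat.cast_nonneg n), Real.sqrt_sq hσ0]
    have : 1 - r ≤ Real.sqrt (1 - r) := by
      nlinarith [Real.sq_sqrt (show (0:ℝ) ≤ 1 - r by linarith),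
        Real.sqrt_nonneg (1 - r)]
    have hnn : (0:ℝ) ≤ Real.sqrt n * σ := mul_nonneg (Real.sqrt_nonneg _) hσ0
    nlinarith
  calc (1 - Real.exp (-2)) * ((2 - s) / 2) * (1 - r) * Real.sqrt n * σ
      = (1 - Real.exp (-2)) * ((2 - s) / 2) * ((1 - r) * Real.sqrt n * σ) := by ring
    _ ≤ (1 - Real.exp (-2)) * ((2 - s) / 2) * ∑ i ∈ F, (d i : ℝ) :=
        mul_le_mul_of_nonneg_left hkey hc
    _ ≤ _ := hsum1
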